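/- For α, β > -1 and n ≥ 1, the mixed second partial derivative of the Jacobi kernel at (1,1) equals K_n^{(1,1)}(1,1) = (2^{-α-β-3}/Γ(α+2)) · (Γ(n+α+β+3)/Γ(n+β+1)) · (Γ(n+α+2)/(Γ(n) Γ(α+4))) · ((α+2) n (n+α+β+2) + β). -/

import Mathlib

open Real Finset

/-- The classical Jacobi polynomial `P_n^{(α,β)}`, via its explicit hypergeometric sum,
normalized so that `P_n^{(α,β)}(1) = binom(n+α, n)`. -/
noncomputable def jacobiP (α β : ℝ) (n : ℕ) (t : ℝ) : ℝ :=
  (Real.Gamma (α + n + 1) / (n.factorial * Real.Gamma (α + β + n + 1))) *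
    ∑ k ∈ Finset.range (n + 1),
      (n.choose k : ℝ) * (Real.Gamma (α + β + n + k + 1) / Real.Gamma (α + k + 1)) *
        ((t - 1) / 2) ^ k

/-- The squared `L²` norm `h_n^{(α,β)}` of the Jacobi polynomial. -/
noncomputable def jacobiH (α β : ℝ) (n : ℕ) : ℝ :=
  2 ^ (α + β + 1) * Real.Gamma (n + α + 1) * Real.Gamma (n + β + 1) /
    ((2 * n + α + β + 1) * n.factorial * Real.Gamma (n + α + β + 1))

/-- The Christoffel–Darboux kernel of Jacobi polynomials. -/
noncomputable def jacobiK (α β : ℝ) (n : ℕ) (t u : ℝ) : ℝ :=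
  ∑ k ∈ Finset.range (n + 1), jacobiP α β k t * jacobiP α β k u / jacobiH α β k

/-- The derivative of `jacobiP α β k` at `1`. -/
noncomputable def jacobiD (α β : ℝ) (k : ℕ) : ℝ :=
  (Real.Gamma (α + k + 1) / (k.factorial * Real.Gamma (α + β + k + 1))) *
    ((k : ℝ) * (Real.Gamma (α + β + k + 2) / Real.Gamma (α + 2)) / 2)

lemma hasDerivAt_jacobiP (α β : ℝ) (k : ℕ) :
    HasDerivAt (jacobiP α β k) (jacobiD α β k) 1 := by
  have hpow : ∀ j : ℕ, HasDerivAt (fun t : ℝ => ((t - 1) / 2) ^ j)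
      ((j : ℝ) * (((1:ℝ) - 1) / 2) ^ (j - 1) * (1 / 2)) 1 := by
    intro j
    exact (((hasDerivAt_id (1:ℝ)).sub_const 1).div_const 2).pow j
  have hsum : HasDerivAt (fun t : ℝ => ∑ j ∈ Finset.range (k + 1),
      (k.choose j : ℝ) * (Real.Gamma (α + β + k + j + 1) / Real.Gamma (α + j + 1)) *
        ((t - 1) / 2) ^ j)
      (∑ j ∈ Finset.range (k + 1),
      (k.choose j : ℝ) * (Real.Gamma (α + β + k + j + 1) / Real.Gamma (α + j + 1)) *
        ((j : ℝ) * (((1:ℝ) - 1) / 2) ^ (j - 1) * (1 / 2))) 1 := by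
    apply HasDerivAt.fun_sum
    intro j _
    exact (hpow j).const_mul _
  have h := hsum.const_mul (Real.Gamma (α + k + 1) / (k.factorial * Real.Gamma (α + β + k + 1)))
  have hval : ∑ j ∈ Finset.range (k + 1),
      (k.choose j : ℝ) * (Real.Gamma (α + β + k + j + 1) / Real.Gamma (α + j + 1)) *
        ((j : ℝ) * (((1:ℝ) - 1) / 2) ^ (j - 1) * (1 / 2)) =
      (k : ℝ) * (Real.Gamma (α + β + k + 2) / Real.Gamma (α + 2)) / 2 := by
    rw [Finset.sum_eq_single 1]
    · simp [Nat.choose_one_right]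
      ring_nf
    · intro j _ hj
      match j, hj with
      | 0, _ => norm_num
      | (m+2), _ => simp [zero_pow]
    · intro h1
      simp only [Finset.mem_range, not_lt] at h1
      have hk0 : k = 0 := by omega
      subst hk0
      norm_num
  rw [hval] at h
  exact h

lemma two_rpow_eq (α β : ℝ) : (2:ℝ) ^ (-α - β - 3) = 1 / (4 * (2:ℝ) ^ (α + β + 1)) := by
  rw [show (-α - β - 3 : ℝ) = -((α + β + 1) + 2) by ring, Real.rpow_neg (by norm_num),
    Real.rpow_add (by norm_num), show ((2:ℝ) ^ (2:ℝ)) = 4 by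
      rw [show (2:ℝ) = ((2:ℕ):ℝ) by norm_num, Real.rpow_natCast]; norm_num]
  field_simp

set_option maxHeartbeats 2000000 in
lemma jacobi_key_sum (α β : ℝ) (hα : -1 < α) (hβ : -1 < β) (n : ℕ) (hn : 1 ≤ n) :
    ∑ k ∈ Finset.range (n + 1), jacobiD α β k * jacobiD α β k / jacobiH α β k =
      2 ^ (-α - β - 3) / Real.Gamma (α + 2) *
        (Real.Gamma (n + α + β + 3) / Real.Gamma (n + β + 1)) *
        (Real.Gamma (n + α + 2) / (Real.Gamma (n : ℝ) * Real.Gamma (α + 4))) *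
        ((α + 2) * n * (n + α + β + 2) + β) := by
  have hA2 : (0:ℝ) < Real.Gamma (α + 2) := Real.Gamma_pos_of_pos (by linarith)
  have h2p : (0:ℝ) < (2:ℝ) ^ (α + β + 1) := Real.rpow_pos_of_pos (by norm_num) _
  induction n, hn using Nat.le_induction with
  | base =>
    have hab2 : (0:ℝ) < Real.Gamma (α + β + 2) := Real.Gamma_pos_of_pos (by linarith)
    have hB2 : (0:ℝ) < Real.Gamma (β + 2) := Real.Gamma_pos_of_pos (by linarith)
    have g1 : Real.Gamma (α + β + 3) = (α + β + 2) * Real.Gamma (α + β + 2) := by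
      rw [show (α + β + 3 : ℝ) = (α + β + 2) + 1 by ring, Real.Gamma_add_one (by linarith)]
    have g2 : Real.Gamma (α + β + 4) = (α + β + 3) * ((α + β + 2) * Real.Gamma (α + β + 2)) := by
      rw [show (α + β + 4 : ℝ) = (α + β + 3) + 1 by ring, Real.Gamma_add_one (by linarith), g1]
    have g3 : Real.Gamma (α + 3) = (α + 2) * Real.Gamma (α + 2) := by
      rw [show (α + 3 : ℝ) = (α + 2) + 1 by ring, Real.Gamma_add_one (by linarith)]
    have g4 : Real.Gamma (α + 4) = (α + 3) * ((α + 2) * Real.Gamma (α + 2)) := by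
      rw [show (α + 4 : ℝ) = (α + 3) + 1 by ring, Real.Gamma_add_one (by linarith), g3]
    simp only [jacobiD, jacobiH, Finset.sum_range_succ, Finset.sum_range_zero,
      Nat.cast_one, Nat.cast_zero, Nat.factorial_one, Nat.factorial_zero]
    rw [two_rpow_eq]
    norm_num
    rw [show (α + β + 1 + 1 : ℝ) = α + β + 2 by ring,
      show (α + β + 1 + 2 : ℝ) = α + β + 3 by ring,
      show (1 + α + β + 3 : ℝ) = α + β + 4 by ring,
      show (1 + β + 1 : ℝ) = β + 2 by ring,
      show (1 + α + 2 : ℝ) = α + 3 by ring,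
      show (α + 1 + 1 : ℝ) = α + 2 by ring,
      show (1 + α + 1 : ℝ) = α + 2 by ring,
      show (1 + α + β + 1 : ℝ) = α + β + 2 by ring,
      g1, g2, g3, g4]
    have h1 : (2 + α + β + 1 : ℝ) ≠ 0 := by linarith
    have h2 : (α + 3 : ℝ) ≠ 0 := by linarith
    have h3 : (α + 2 : ℝ) ≠ 0 := by linarith
    have h4 : Real.Gamma (α + 2) ≠ 0 := ne_of_gt hA2
    have h5 : Real.Gamma (β + 2) ≠ 0 := ne_of_gt hB2
    have h6 : Real.Gamma (α + β + 2) ≠ 0 := ne_of_gt hab2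
    have h7 : (2:ℝ) ^ (α + β + 1) ≠ 0 := ne_of_gt h2p
    field_simp
    ring
  | succ n hn ih =>
    have hN : (1:ℝ) ≤ (n:ℝ) := by exact_mod_cast hn
    have hn0 : ((n:ℝ)) ≠ 0 := by linarith
    rw [Finset.sum_range_succ, ih]
    have hfac : ((n.factorial : ℕ) : ℝ) = (n:ℝ) * Real.Gamma (n:ℝ) := by
      rw [← Real.Gamma_nat_eq_factorial, Real.Gamma_add_one hn0]
    have hGn : (0:ℝ) < Real.Gamma (n:ℝ) := Real.Gamma_pos_of_pos (by linarith)
    have hGb : (0:ℝ) < Real.Gamma ((n:ℝ) + β + 1) := Real.Gamma_pos_of_pos (by linarith)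
    have hGa : (0:ℝ) < Real.Gamma ((n:ℝ) + α + 2) := Real.Gamma_pos_of_pos (by linarith)
    have hGab : (0:ℝ) < Real.Gamma ((n:ℝ) + α + β + 2) := Real.Gamma_pos_of_pos (by linarith)
    simp only [jacobiD, jacobiH]
    push_cast
    have hfac1 : (((n+1).factorial : ℕ) : ℝ) = ((n:ℝ)+1) * ((n:ℝ) * Real.Gamma (n:ℝ)) := by
      rw [Nat.factorial_succ]; push_cast; rw [hfac]
    have e1 : Real.Gamma (α + ((n:ℝ) + 1) + 1) = Real.Gamma ((n:ℝ) + α + 2) := by congr 1; ring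
    have e3 : Real.Gamma (α + β + ((n:ℝ) + 1) + 1) = Real.Gamma ((n:ℝ) + α + β + 2) := by
      congr 1; ring
    have e5 : Real.Gamma ((n:ℝ) + 1 + α + 1) = Real.Gamma ((n:ℝ) + α + 2) := by congr 1; ring
    have e7 : Real.Gamma ((n:ℝ) + 1 + α + β + 1) = Real.Gamma ((n:ℝ) + α + β + 2) := by
      congr 1; ring
    have g13 : Real.Gamma ((n:ℝ) + α + β + 3) =
        ((n:ℝ) + α + β + 2) * Real.Gamma ((n:ℝ) + α + β + 2) := by
      rw [show ((n:ℝ) + α + β + 3) = ((n:ℝ) + α + β + 2) + 1 by ring,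
        Real.Gamma_add_one (by linarith)]
    have g4 : Real.Gamma (α + β + ((n:ℝ) + 1) + 2) =
        ((n:ℝ) + α + β + 2) * Real.Gamma ((n:ℝ) + α + β + 2) := by
      rw [show (α + β + ((n:ℝ) + 1) + 2) = ((n:ℝ) + α + β + 2) + 1 by ring,
        Real.Gamma_add_one (by linarith)]
    have g6 : Real.Gamma ((n:ℝ) + 1 + β + 1) = ((n:ℝ) + β + 1) * Real.Gamma ((n:ℝ) + β + 1) := by
      rw [show ((n:ℝ) + 1 + β + 1) = ((n:ℝ) + β + 1) + 1 by ring,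
        Real.Gamma_add_one (by linarith)]
    have g8 : Real.Gamma ((n:ℝ) + 1 + α + β + 3) =
        ((n:ℝ) + α + β + 3) * (((n:ℝ) + α + β + 2) * Real.Gamma ((n:ℝ) + α + β + 2)) := by
      rw [show ((n:ℝ) + 1 + α + β + 3) = ((n:ℝ) + α + β + 3) + 1 by ring,
        Real.Gamma_add_one (by linarith), g13]
    have g9 : Real.Gamma ((n:ℝ) + 1 + α + 2) = ((n:ℝ) + α + 2) * Real.Gamma ((n:ℝ) + α + 2) := by
      rw [show ((n:ℝ) + 1 + α + 2) = ((n:ℝ) + α + 2) + 1 by ring,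
        Real.Gamma_add_one (by linarith)]
    have g10 : Real.Gamma ((n:ℝ) + 1) = (n:ℝ) * Real.Gamma (n:ℝ) :=
      Real.Gamma_add_one hn0
    have g3 : Real.Gamma (α + 3) = (α + 2) * Real.Gamma (α + 2) := by
      rw [show (α + 3 : ℝ) = (α + 2) + 1 by ring, Real.Gamma_add_one (by linarith)]
    have g11 : Real.Gamma (α + 4) = (α + 3) * ((α + 2) * Real.Gamma (α + 2)) := by
      rw [show (α + 4 : ℝ) = (α + 3) + 1 by ring, Real.Gamma_add_one (by linarith), g3]
    rw [hfac1, e1, e3, e5, e7, g4, g6, g8, g9, g10, g11, g13, two_rpow_eq]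
    have h1 : ((n:ℝ) + β + 1) ≠ 0 := by linarith
    have h2 : (α + 3 : ℝ) ≠ 0 := by linarith
    have h3 : (α + 2 : ℝ) ≠ 0 := by linarith
    have h4 : Real.Gamma (α + 2) ≠ 0 := ne_of_gt hA2
    have h5 : Real.Gamma ((n:ℝ) + β + 1) ≠ 0 := ne_of_gt hGb
    have h6 : Real.Gamma ((n:ℝ) + α + β + 2) ≠ 0 := ne_of_gt hGab
    have h7 : (2:ℝ) ^ (α + β + 1) ≠ 0 := ne_of_gt h2p
    have h8 : Real.Gamma ((n:ℝ) + α + 2) ≠ 0 := ne_of_gt hGa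
    have h9 : Real.Gamma (n:ℝ) ≠ 0 := ne_of_gt hGn
    have h10 : ((n:ℝ) + 1) ≠ 0 := by linarith
    have h11 : (2 * ((n:ℝ) + 1) + α + β + 1) ≠ 0 := by linarith
    field_simp
    ring

/-- The mixed partial derivative `K_n^{(1,1)}(t,u) = ∂²K_n/(∂t∂u)` of the Jacobi kernel,
at `(1,1)`. -/
theorem jacobiK11_one_one (α β : ℝ) (hα : -1 < α) (hβ : -1 < β) (n : ℕ) (hn : 1 ≤ n) :
    deriv (fun t => deriv (fun u => jacobiK α β n t u) 1) 1 =
      2 ^ (-α - β - 3) / Real.Gamma (α + 2) *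
        (Real.Gamma (n + α + β + 3) / Real.Gamma (n + β + 1)) *
        (Real.Gamma (n + α + 2) / (Real.Gamma (n : ℝ) * Real.Gamma (α + 4))) *
        ((α + 2) * n * (n + α + β + 2) + β) := by
  have hinner : (fun t => deriv (fun u => jacobiK α β n t u) 1) =
      fun t => ∑ k ∈ Finset.range (n + 1),
        jacobiP α β k t * jacobiD α β k / jacobiH α β k := by
    funext t
    have h : HasDerivAt (fun u => jacobiK α β n t u)
        (∑ k ∈ Finset.range (n + 1),
          jacobiP α β k t * jacobiD α β k / jacobiH α β k) 1 := by
      simp only [jacobiK]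
      apply HasDerivAt.fun_sum
      intro k _
      exact (((hasDerivAt_jacobiP α β k).const_mul (jacobiP α β k t)).div_const _)
    exact h.deriv
  rw [hinner]
  have houter : HasDerivAt (fun t => ∑ k ∈ Finset.range (n + 1),
      jacobiP α β k t * jacobiD α β k / jacobiH α β k)
      (∑ k ∈ Finset.range (n + 1),
        jacobiD α β k * jacobiD α β k / jacobiH α β k) 1 := by
    apply HasDerivAt.fun_sum
    intro k _
    exact (((hasDerivAt_jacobiP α β k).mul_const (jacobiD α β k)).div_const _)
  rw [houter.deriv]
  exact jacobi_key_sum α β hα hβ n hn
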